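/- Let c ∈ ℂⁿ, let L : ℂⁿ → ℂ be linear, H : ℂⁿ → ℂ satisfy H(z+c) = H(z), and D₁, D₂, ω₁, ω₂, γ₁, γ₂, √a, √b ∈ ℂ with √a ≠ 0, ω₁ ≠ ω₂, ω₁·ω₂ = 1. Define h₁(z) = L₁(z) + H₁(z) + D₁ and h₂(z) = L₂(z) + H₂(z) + D₂ with L₁, L₂ linear and H₁, H₂ c-periodic, and f(z) = (ω₂·e^{h₁(z)} - ω₁·e^{h₂(z)})/(√a·(ω₂-ω₁)). If -(ω₂γ₂√b - √a)/(ω₂γ₁√b)·e^{-L₁(c)} = 1 and -(ω₁γ₂√b - √a)/(ω₁γ₁√b)·e^{-L₂(c)} = 1, then γ₁·f(z+c) + γ₂·f(z) = (e^{h₁(z)} - e^{h₂(z)})/(√b·(ω₂-ω₁)) for all z ∈ ℂⁿ. -/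

import Mathlib

theorem stmt_13 (n : ℕ) (hn : 1 ≤ n) (c : Fin n → ℂ)
    (sa sb γ₁ γ₂ ω₁ ω₂ D₁ D₂ : ℂ)
    (hsa0 : sa ≠ 0) (hsb0 : sb ≠ 0) (hγ₁ : γ₁ ≠ 0)
    (hω : ω₁ ≠ ω₂) (hprod : ω₁ * ω₂ = 1)
    (L₁ L₂ : (Fin n → ℂ) →ₗ[ℂ] ℂ) (H₁ H₂ : (Fin n → ℂ) → ℂ)
    (hH₁ : ∀ z, H₁ (z + c) = H₁ z) (hH₂ : ∀ z, H₂ (z + c) = H₂ z)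
    (h₁ h₂ : (Fin n → ℂ) → ℂ)
    (hh₁ : ∀ z, h₁ z = L₁ z + H₁ z + D₁) (hh₂ : ∀ z, h₂ z = L₂ z + H₂ z + D₂)
    (f : (Fin n → ℂ) → ℂ)
    (hf : ∀ z, f z = (ω₂ * Complex.exp (h₁ z) - ω₁ * Complex.exp (h₂ z)) / (sa * (ω₂ - ω₁)))
    (hc₁ : -((ω₂ * γ₂ * sb - sa) / (ω₂ * γ₁ * sb)) * Complex.exp (-(L₁ c)) = 1)
    (hc₂ : -((ω₁ * γ₂ * sb - sa) / (ω₁ * γ₁ * sb)) * Complex.exp (-(L₂ c)) = 1) :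
    ∀ z : Fin n → ℂ, γ₁ * f (z + c) + γ₂ * f z =
      (Complex.exp (h₁ z) - Complex.exp (h₂ z)) / (sb * (ω₂ - ω₁)) := by
  have hω₁ : ω₁ ≠ 0 := by rintro rfl; simp at hprod
  have hω₂ : ω₂ ≠ 0 := by rintro rfl; simp at hprod
  have hωd : ω₂ - ω₁ ≠ 0 := sub_ne_zero.mpr (Ne.symm hω)
  have he1 : Complex.exp (L₁ c) ≠ 0 := Complex.exp_ne_zero _
  have he2 : Complex.exp (L₂ c) ≠ 0 := Complex.exp_ne_zero _
  rw [Complex.exp_neg] at hc₁ hc₂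
  field_simp at hc₁ hc₂
  intro z
  simp only [hf, hh₁, hh₂, map_add, hH₁, hH₂]
  have eA : Complex.exp (L₁ z + L₁ c + H₁ z + D₁)
      = Complex.exp (L₁ z + H₁ z + D₁) * Complex.exp (L₁ c) := by
    rw [← Complex.exp_add]; ring_nf
  have eB : Complex.exp (L₂ z + L₂ c + H₂ z + D₂)
      = Complex.exp (L₂ z + H₂ z + D₂) * Complex.exp (L₂ c) := by
    rw [← Complex.exp_add]; ring_nf
  rw [eA, eB]
  field_simp
  linear_combination (Complex.exp (L₂ z + H₂ z + D₂)) * hc₂ - (Complex.exp (L₁ z + H₁ z + D₁)) * hc₁
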